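/- If bβ + 2d < μ1 − μ0 and μ1 − μ0 > ω, then there exist real numbers 0 < Ǐ < Î such that Ψ(Ǐ) = Ψ(Î) = 0, Ψ'(Ǐ) < 0, Ψ'(Î) > 0 (where Ψ'(I) = 3βI² + 2(2bβ + d)I + (b²β + 2bd − bμ1 + bμ0)), Ψ(I) > 0 for I ∈ (0, Ǐ) ∪ (Î, ∞), and Ψ(I) < 0 for I ∈ (Ǐ, Î). -/
import Mathlib

set_option maxHeartbeats 1600000 in
/-- If `bβ + 2d < μ1 − μ0` and `μ1 − μ0 > ω`, then there exist
`0 < Ǐ < Î` with `Ψ(Ǐ) = Ψ(Î) = 0`, `Ψ'(Ǐ) < 0`, `Ψ'(Î) > 0`,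
`Ψ(I) > 0` on `(0, Ǐ) ∪ (Î, ∞)` and `Ψ(I) < 0` on `(Ǐ, Î)`. -/
theorem stmt13 (d β b μ0 μ1 : ℝ)
    (hd : 0 < d) (hβ : 0 < β) (hb : 0 < b)
    (hμ0 : 0 < μ0) (hμ1 : 0 < μ1) (hμ : μ0 < μ1)
    (Ψ Ψ' : ℝ → ℝ)
    (hΨ : ∀ I, Ψ I = β * I ^ 3 + (2 * b * β + d) * I ^ 2
      + (b ^ 2 * β + 2 * b * d - b * μ1 + b * μ0) * I + b ^ 2 * d)
    (hΨ' : ∀ I, Ψ' I = 3 * β * I ^ 2 + 2 * (2 * b * β + d) * I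
      + (b ^ 2 * β + 2 * b * d - b * μ1 + b * μ0))
    (ω : ℝ)
    (hω : ω = (8 * b ^ 2 * β ^ 2 + 20 * b * β * d - d ^ 2
      + Real.sqrt (d * (8 * b * β + d) ^ 3)) / (8 * b * β))
    (hcond1 : b * β + 2 * d < μ1 - μ0)
    (hcond2 : ω < μ1 - μ0) :
    ∃ Icheck Ihat : ℝ, 0 < Icheck ∧ Icheck < Ihat ∧
      Ψ Icheck = 0 ∧ Ψ Ihat = 0 ∧ Ψ' Icheck < 0 ∧ 0 < Ψ' Ihat ∧
      (∀ I : ℝ, (0 < I ∧ I < Icheck) ∨ Ihat < I → 0 < Ψ I) ∧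
      (∀ I : ℝ, Icheck < I → I < Ihat → Ψ I < 0) := by
  have hm : 0 < μ1 - μ0 := by linarith
  -- auxiliary square roots
  set s : ℝ := Real.sqrt (d * (8 * b * β + d)) with hsdef
  have hs2 : s ^ 2 = d * (8 * b * β + d) := Real.sq_sqrt (by positivity)
  have hs0 : 0 ≤ s := Real.sqrt_nonneg _
  have hsd : d < s := by nlinarith [hs2, hs0, mul_pos (mul_pos hb hβ) hd]
  have h8 : (0:ℝ) < 8 * b * β + d := by positivity
  have hsqrt3 : Real.sqrt (d * (8 * b * β + d) ^ 3) = (8 * b * β + d) * s := by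
    rw [show d * (8 * b * β + d) ^ 3 = (8 * b * β + d) ^ 2 * (d * (8 * b * β + d)) by ring,
      Real.sqrt_mul (by positivity), Real.sqrt_sq h8.le]
  set Istar : ℝ := (s - d) / (4 * β) with hIstardef
  have hIpos : 0 < Istar := div_pos (by linarith) (by positivity)
  have hωs : ω * (8 * b * β) = 8 * b ^ 2 * β ^ 2 + 20 * b * β * d - d ^ 2
      + (8 * b * β + d) * s := by
    rw [hω, hsqrt3]
    field_simp
  -- Ψ at Istar is negative
  have hΨstar : Ψ Istar < 0 := by
    have h1 : 64 * β ^ 2 * Ψ Istar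
        = (s - d + 4 * b * β) ^ 2 * (s + 3 * d) - 16 * β * b * (μ1 - μ0) * (s - d) := by
      rw [hΨ, hIstardef]
      field_simp
      ring
    have h3 : 64 * β ^ 2 * Ψ Istar = 16 * b * β * (s - d) * (ω - (μ1 - μ0)) := by
      linear_combination h1 + (s - (8 * b * β + d)) * hs2 - 2 * (s - d) * hωs
    nlinarith [h3, mul_pos (mul_pos (mul_pos hb hβ) (show (0:ℝ) < s - d by linarith))
      (show (0:ℝ) < μ1 - μ0 - ω by linarith), sq_nonneg β]
  -- a large point where Ψ is positive
  set t : ℝ := Real.sqrt (b * (μ1 - μ0) / β) with htdef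
  have ht2 : t ^ 2 = b * (μ1 - μ0) / β :=
    Real.sq_sqrt (div_nonneg (mul_nonneg hb.le hm.le) hβ.le)
  have ht0 : 0 ≤ t := Real.sqrt_nonneg _
  have ht2β : β * t ^ 2 = b * (μ1 - μ0) := by rw [ht2]; field_simp
  set M : ℝ := Istar + t + 1 with hMdef
  have hMt : t < M := by rw [hMdef]; linarith
  have hM0 : 0 < M := lt_of_le_of_lt ht0 hMt
  have hIstarM : Istar ≤ M := by rw [hMdef]; linarith
  have hΨM : 0 < Ψ M := by
    have h5 : 0 < β * M * ((M - t) * (M + t)) :=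
      mul_pos (mul_pos hβ hM0) (mul_pos (by linarith) (by linarith))
    have h6 : β * M * t ^ 2 = b * (μ1 - μ0) * M := by linear_combination M * ht2β
    have h7 : 0 < (2 * b * β + d) * M ^ 2 := by positivity
    have h8' : 0 < (b ^ 2 * β + 2 * b * d) * M := by positivity
    have h9 : 0 < b ^ 2 * d := by positivity
    rw [hΨ]
    nlinarith [h5, h6, h7, h8', h9]
  have hΨ0 : 0 < Ψ 0 := by
    have : Ψ 0 = b ^ 2 * d := by rw [hΨ]; ring
    rw [this]; positivity
  -- continuity
  have hcont : Continuous Ψ := by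
    rw [show Ψ = fun I => β * I ^ 3 + (2 * b * β + d) * I ^ 2
      + (b ^ 2 * β + 2 * b * d - b * μ1 + b * μ0) * I + b ^ 2 * d from funext hΨ]
    continuity
  -- first root in (0, Istar)
  obtain ⟨I1, hI1mem, hI1root⟩ :=
    intermediate_value_Icc' hIpos.le hcont.continuousOn ⟨hΨstar.le, hΨ0.le⟩
  have hI10 : 0 < I1 := by
    rcases eq_or_lt_of_le hI1mem.1 with h | h
    · exfalso; rw [← h] at hI1root; linarith
    · exact h
  have hI1star : I1 < Istar := by
    rcases eq_or_lt_of_le hI1mem.2 with h | h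
    · exfalso; rw [h] at hI1root; linarith
    · exact h
  -- second root in (Istar, M]
  obtain ⟨I2, hI2mem, hI2root⟩ :=
    intermediate_value_Icc hIstarM hcont.continuousOn ⟨hΨstar.le, hΨM.le⟩
  have hI2star : Istar < I2 := by
    rcases eq_or_lt_of_le hI2mem.1 with h | h
    · exfalso; rw [← h] at hI2root; linarith
    · exact h
  have hI12 : I1 < I2 := lt_trans hI1star hI2star
  have hI20 : 0 < I2 := lt_trans hI10 hI12
  have hδ : I1 - I2 ≠ 0 := sub_ne_zero.mpr (ne_of_lt hI12)
  -- root equations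
  have e1 : β * I1 ^ 3 + (2 * b * β + d) * I1 ^ 2
      + (b ^ 2 * β + 2 * b * d - b * μ1 + b * μ0) * I1 + b ^ 2 * d = 0 := by
    rw [← hΨ]; exact hI1root
  have e2 : β * I2 ^ 3 + (2 * b * β + d) * I2 ^ 2
      + (b ^ 2 * β + 2 * b * d - b * μ1 + b * μ0) * I2 + b ^ 2 * d = 0 := by
    rw [← hΨ]; exact hI2root
  -- factorization (scaled)
  have key : ∀ I : ℝ, β * I1 * I2 * Ψ I
      = β * (I - I1) * (I - I2) * (β * I1 * I2 * I + b ^ 2 * d) := by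
    intro I
    have hk : (I1 - I2) * (β * I1 * I2 * Ψ I
        - β * (I - I1) * (I - I2) * (β * I1 * I2 * I + b ^ 2 * d)) = 0 := by
      rw [hΨ I]
      linear_combination (β * I * I2 * (I - I2)) * e1 - (β * I * I1 * (I - I1)) * e2
    have h := (mul_eq_zero.mp hk).resolve_left hδ
    linarith [sub_eq_zero.mp h]
  -- derivative values at the roots
  have hd1 : I1 * I2 * (I1 - I2) * Ψ' I1 = (I1 - I2) ^ 2 * (β * I1 ^ 2 * I2 + b ^ 2 * d) := by
    rw [hΨ' I1]
    linear_combination (I1 * I2 + (I1 - I2) * I1 - (I1 - I2) ^ 2) * e1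
      - (I1 * I2 + (I1 - I2) * I1) * e2
  have hd2 : I1 * I2 * (I2 - I1) * Ψ' I2 = (I2 - I1) ^ 2 * (β * I2 ^ 2 * I1 + b ^ 2 * d) := by
    rw [hΨ' I2]
    linear_combination (I1 * I2 + (I2 - I1) * I2 - (I2 - I1) ^ 2) * e2
      - (I1 * I2 + (I2 - I1) * I2) * e1
  have hprodpos : 0 < I1 * I2 := mul_pos hI10 hI20
  have hBpos : 0 < β * I1 * I2 := by positivity
  have hΨ'1 : Ψ' I1 < 0 := by
    have hR : 0 < (I1 - I2) ^ 2 * (β * I1 ^ 2 * I2 + b ^ 2 * d) :=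
      mul_pos (pow_two_pos_of_ne_zero hδ) (by positivity)
    by_contra hcon
    push_neg at hcon
    have hF : I1 * I2 * (I1 - I2) < 0 := mul_neg_of_pos_of_neg hprodpos (by linarith)
    have : I1 * I2 * (I1 - I2) * Ψ' I1 ≤ 0 := mul_nonpos_of_nonpos_of_nonneg hF.le hcon
    linarith [hd1]
  have hΨ'2 : 0 < Ψ' I2 := by
    have hR : 0 < (I2 - I1) ^ 2 * (β * I2 ^ 2 * I1 + b ^ 2 * d) :=
      mul_pos (pow_two_pos_of_ne_zero (sub_ne_zero.mpr (ne_of_gt hI12))) (by positivity)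
    by_contra hcon
    push_neg at hcon
    have hF : 0 < I1 * I2 * (I2 - I1) := mul_pos hprodpos (by linarith)
    have : I1 * I2 * (I2 - I1) * Ψ' I2 ≤ 0 := mul_nonpos_of_nonneg_of_nonpos hF.le hcon
    linarith [hd2]
  refine ⟨I1, I2, hI10, hI12, hI1root, hI2root, hΨ'1, hΨ'2, ?_, ?_⟩
  · intro I hI
    have hI0 : 0 < I := by
      rcases hI with ⟨h, _⟩ | h
      · exact h
      · exact lt_trans hI20 h
    have hB : 0 < β * I1 * I2 * I + b ^ 2 * d := by positivity
    have hRpos : 0 < β * (I - I1) * (I - I2) * (β * I1 * I2 * I + b ^ 2 * d) := by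
      rcases hI with ⟨_, hII1⟩ | hII2
      · exact mul_pos (mul_pos_of_neg_of_neg
          (mul_neg_of_pos_of_neg hβ (by linarith)) (by linarith)) hB
      · exact mul_pos (mul_pos (mul_pos hβ (by linarith)) (by linarith)) hB
    by_contra hcon
    push_neg at hcon
    have : β * I1 * I2 * Ψ I ≤ 0 := mul_nonpos_of_nonneg_of_nonpos hBpos.le hcon
    linarith [key I]
  · intro I h1 h2
    have hI0 : 0 < I := lt_trans hI10 h1
    have hB : 0 < β * I1 * I2 * I + b ^ 2 * d := by positivity
    have hRneg : β * (I - I1) * (I - I2) * (β * I1 * I2 * I + b ^ 2 * d) < 0 :=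
      mul_neg_of_neg_of_pos
        (mul_neg_of_pos_of_neg (mul_pos hβ (by linarith)) (by linarith)) hB
    by_contra hcon
    push_neg at hcon
    have : 0 ≤ β * I1 * I2 * Ψ I := mul_nonneg hBpos.le hcon
    linarith [key I]
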